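/- Let φ : (0, 1] → ℂ be continuously differentiable, assume that the map s ↦ s³φ′(s) is continuously differentiable on (0, 1], and assume the two integrability conditions ∫₀¹ s³|φ(s)|² ds < ∞ and ∫₀¹ s⁻³ |(d/ds)(s³φ′(s))|² ds < ∞. Then lim_{s→0⁺} s³φ′(s) = 0 and lim_{s→0⁺} s³φ(s) = 0. -/

import Mathlib

open Set MeasureTheory Filter

section Aux

lemma zpow_neg3 (t:ℝ) : t ^ (-3:ℤ) = (t^3)⁻¹ := by
  rw [zpow_neg]; norm_cast

lemma integral_inv_cube {a b : ℝ} (ha : 0 < a) (hab : a ≤ b) :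
    ∫ t in a..b, (t^3)⁻¹ = ((a^2)⁻¹ - (b^2)⁻¹)/2 := by
  have h0 : (0:ℝ) ∉ uIcc a b := by
    rw [uIcc_of_le hab]; intro h; exact absurd h.1 (not_le.2 ha)
  have h : ∫ t in a..b, (t^3)⁻¹ = ∫ t in a..b, t ^ (-3:ℤ) := by
    apply intervalIntegral.integral_congr
    intro t ht; exact (zpow_neg3 t).symm
  rw [h, integral_zpow (Or.inr ⟨by norm_num, h0⟩)]
  have hb : b ≠ 0 := fun h => absurd (h ▸ hab) (not_le.2 ha)
  have ha' : a ≠ 0 := ha.ne'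
  norm_num [zpow_neg]
  field_simp
  norm_cast
  ring

lemma ftc_Ioc (f f' : ℝ → ℂ)
    (hf : ∀ s ∈ Ioc (0:ℝ) 1, HasDerivWithinAt f (f' s) (Ioc 0 1) s)
    (hf' : ContinuousOn f' (Ioc 0 1)) {a b : ℝ} (ha : 0 < a) (hab : a ≤ b) (hb : b ≤ 1) :
    ∫ t in a..b, f' t = f b - f a := by
  have hsub : Icc a b ⊆ Ioc (0:ℝ) 1 := fun x hx => ⟨lt_of_lt_of_le ha hx.1, le_trans hx.2 hb⟩
  apply intervalIntegral.integral_eq_sub_of_hasDeriv_right_of_le hab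
  · intro x hx
    exact ((hf x (hsub hx)).continuousWithinAt).mono hsub
  · intro x hx
    have hx1 : x ∈ Ioc (0:ℝ) 1 := hsub ⟨hx.1.le, hx.2.le⟩
    have hnhds : Ioc (0:ℝ) 1 ∈ nhds x :=
      mem_nhds_iff.2 ⟨Ioo 0 1, Ioo_subset_Ioc_self, isOpen_Ioo,
        ⟨lt_of_lt_of_le ha hx.1.le, lt_of_lt_of_le hx.2 hb⟩⟩
    exact (((hf x hx1).hasDerivAt hnhds)).hasDerivWithinAt
  · rw [intervalIntegrable_iff_integrableOn_Icc_of_le hab]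
    exact (hf'.mono hsub).integrableOn_compact isCompact_Icc

lemma estimate (φ φ₁ : ℝ → ℂ)
    (hdφ : ∀ s ∈ Ioc (0:ℝ) 1, HasDerivWithinAt φ (φ₁ s) (Ioc 0 1) s)
    (hcφ₁ : ContinuousOn φ₁ (Ioc 0 1))
    (L : ℂ) (ε : ℝ) (hε0 : 0 ≤ ε) {a b : ℝ} (ha : 0 < a) (hab : a ≤ b) (hb : b ≤ 1)
    (hε : ∀ t ∈ Ioc (0:ℝ) b, ‖(t:ℂ)^3 * φ₁ t - L‖ ≤ ε) :
    ‖(φ b - φ a) - ((((a^2)⁻¹ - (b^2)⁻¹)/2 : ℝ) : ℂ) * L‖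
      ≤ ε * (((a^2)⁻¹ - (b^2)⁻¹)/2) := by
  have hsub : Icc a b ⊆ Ioc (0:ℝ) 1 := fun x hx => ⟨lt_of_lt_of_le ha hx.1, le_trans hx.2 hb⟩
  have hne : ∀ t ∈ Icc a b, t ≠ 0 := fun t ht => (lt_of_lt_of_le ha ht.1).ne'
  have hiφ₁ : IntervalIntegrable φ₁ volume a b := by
    apply ContinuousOn.intervalIntegrable
    rw [uIcc_of_le hab]; exact hcφ₁.mono hsub
  have hcont_cube : ContinuousOn (fun t : ℝ => ((t^3)⁻¹ : ℝ)) (Icc a b) :=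
    ((continuous_pow 3).continuousOn).inv₀ (fun t ht => pow_ne_zero 3 (hne t ht))
  have hicubeC : IntervalIntegrable (fun t : ℝ => (((t^3)⁻¹ : ℝ) : ℂ) * L) volume a b := by
    apply ContinuousOn.intervalIntegrable; rw [uIcc_of_le hab]
    exact (Complex.continuous_ofReal.comp_continuousOn hcont_cube).mul continuousOn_const
  have hftc : ∫ t in a..b, φ₁ t = φ b - φ a := ftc_Ioc φ φ₁ hdφ hcφ₁ ha hab hb
  have hIc : ∫ t in a..b, (((t^3)⁻¹ : ℝ) : ℂ) * L
      = ((((a^2)⁻¹ - (b^2)⁻¹)/2 : ℝ) : ℂ) * L := by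
    rw [intervalIntegral.integral_mul_const]
    norm_cast
    rw [intervalIntegral.integral_ofReal, integral_inv_cube ha hab]
  have hsplit : (φ b - φ a) - ((((a^2)⁻¹ - (b^2)⁻¹)/2 : ℝ) : ℂ) * L
      = ∫ t in a..b, (φ₁ t - (((t^3)⁻¹ : ℝ) : ℂ) * L) := by
    rw [intervalIntegral.integral_sub hiφ₁ hicubeC, hftc, hIc]
  rw [hsplit]
  have hibound : IntervalIntegrable (fun t : ℝ => ε * (t^3)⁻¹) volume a b := by
    apply ContinuousOn.intervalIntegrable; rw [uIcc_of_le hab]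
    exact continuousOn_const.mul hcont_cube
  have hae : ∀ᵐ t ∂(volume.restrict (Set.uIoc a b)),
      ‖φ₁ t - (((t^3)⁻¹ : ℝ) : ℂ) * L‖ ≤ ε * (t^3)⁻¹ := by
    rw [uIoc_of_le hab, ae_restrict_iff' measurableSet_Ioc]
    refine Filter.Eventually.of_forall fun t ht => ?_
    have ht0 : 0 < t := lt_trans ha ht.1
    have htC : ((t:ℂ))^3 ≠ 0 := pow_ne_zero 3 (by exact_mod_cast ht0.ne')
    have hkey : φ₁ t - (((t^3)⁻¹ : ℝ) : ℂ) * L = ((t:ℂ)^3)⁻¹ * ((t:ℂ)^3 * φ₁ t - L) := by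
      push_cast
      have ht' : (t:ℂ) ≠ 0 := by exact_mod_cast ht0.ne'
      field_simp
    rw [hkey, norm_mul, norm_inv, norm_pow, Complex.norm_real, Real.norm_eq_abs,
      abs_of_pos ht0]
    calc (t^3)⁻¹ * ‖(t:ℂ)^3 * φ₁ t - L‖ ≤ (t^3)⁻¹ * ε :=
          mul_le_mul_of_nonneg_left (hε t ⟨ht0, ht.2⟩) (by positivity)
      _ = ε * (t^3)⁻¹ := mul_comm _ _
  have hnn : 0 ≤ ε * (((a^2)⁻¹ - (b^2)⁻¹)/2) := by
    have hr : (b^2)⁻¹ ≤ (a^2)⁻¹ := by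
      apply inv_anti₀ (pow_pos ha 2)
      exact pow_le_pow_left₀ ha.le hab 2
    have : 0 ≤ ((a^2)⁻¹ - (b^2)⁻¹)/2 := by linarith
    exact mul_nonneg hε0 this
  have := intervalIntegral.norm_integral_le_abs_of_norm_le hae hibound
  refine this.trans ?_
  rw [intervalIntegral.integral_const_mul, integral_inv_cube ha hab, abs_of_nonneg hnn]

lemma exists_delta {P : ℝ → Prop} (h : ∀ᶠ t in nhdsWithin 0 (Ioc (0:ℝ) 1), P t) :
    ∃ δ : ℝ, 0 < δ ∧ δ ≤ 1 ∧ ∀ t ∈ Ioc (0:ℝ) δ, P t := by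
  rw [eventually_nhdsWithin_iff, Metric.eventually_nhds_iff] at h
  obtain ⟨η, hη, hP⟩ := h
  refine ⟨min (η/2) 1, lt_min (by linarith) one_pos, min_le_right _ _, fun t ht => ?_⟩
  have ht1 : t ≤ 1 := le_trans ht.2 (min_le_right _ _)
  refine hP ?_ ⟨ht.1, ht1⟩
  rw [Real.dist_eq, sub_zero, abs_of_pos ht.1]
  exact lt_of_le_of_lt (le_trans ht.2 (min_le_left _ _)) (by linarith)

end Aux

/-- `φ : (0,1] → ℂ` is continuously differentiable with derivative `φ₁`, the map
`s ↦ s³ φ₁ s` is continuously differentiable with derivative `g`, and both `φ` and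
`s ↦ s⁻³ g s` belong to the weighted space `L²((0,1), s³ ds)` (a smooth-representative
version of the domain of the singular Sturm–Liouville operator `T`). -/
def MemDomT (φ φ₁ g : ℝ → ℂ) : Prop :=
  (∀ s ∈ Ioc (0:ℝ) 1, HasDerivWithinAt φ (φ₁ s) (Ioc 0 1) s) ∧
  ContinuousOn φ₁ (Ioc 0 1) ∧
  (∀ s ∈ Ioc (0:ℝ) 1, HasDerivWithinAt (fun t : ℝ => (t:ℂ) ^ 3 * φ₁ t) (g s) (Ioc 0 1) s) ∧
  ContinuousOn g (Ioc 0 1) ∧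
  IntegrableOn (fun s => s ^ 3 * ‖φ s‖ ^ 2) (Ioc 0 1) ∧
  IntegrableOn (fun s => (s ^ 3)⁻¹ * ‖g s‖ ^ 2) (Ioc 0 1)

/-- Functions in the domain of the singular Sturm–Liouville operator satisfy
`s³ φ'(s) → 0` and `s³ φ(s) → 0` as `s → 0⁺`. -/
theorem domain_boundary_behaviour_at_zero
    (φ φ₁ g : ℝ → ℂ) (hφ : MemDomT φ φ₁ g) :
    Tendsto (fun s : ℝ => (s:ℂ) ^ 3 * φ₁ s) (nhdsWithin 0 (Ioc 0 1)) (nhds 0) ∧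
    Tendsto (fun s : ℝ => (s:ℂ) ^ 3 * φ s) (nhdsWithin 0 (Ioc 0 1)) (nhds 0) := by
  obtain ⟨hdφ, hcφ₁, hdψ, hcg, hint1, hint2⟩ := hφ
  set ψ : ℝ → ℂ := fun s => (s:ℂ) ^ 3 * φ₁ s with hψdef
  -- g is integrable on (0,1]
  have hgL1 : IntegrableOn g (Ioc 0 1) := by
    have hbound : IntegrableOn (fun s => ((s ^ 3)⁻¹ * ‖g s‖ ^ 2 + s ^ 3) / 2) (Ioc 0 1) := by
      apply Integrable.div_const
      exact hint2.add ((continuous_pow 3).continuousOn.integrableOn_compact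
        isCompact_Icc |>.mono_set Ioc_subset_Icc_self)
    refine Integrable.mono' hbound (hcg.aestronglyMeasurable measurableSet_Ioc) ?_
    rw [ae_restrict_iff' measurableSet_Ioc]
    refine Eventually.of_forall fun s hs => ?_
    have hs3 : (0:ℝ) < s ^ 3 := pow_pos hs.1 3
    have heq : (s ^ 3)⁻¹ * ‖g s‖ ^ 2 + s ^ 3 = (‖g s‖ ^ 2 + (s ^ 3) ^ 2) / s ^ 3 := by
      field_simp
    rw [le_div_iff₀ (by norm_num : (0:ℝ) < 2), heq, ← sub_nonneg, div_sub' hs3.ne',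
      le_div_iff₀ hs3]
    nlinarith [sq_nonneg (‖g s‖ - s ^ 3), norm_nonneg (g s), hs3]
  -- ψ has a limit L at 0⁺
  set G : ℝ → ℂ := (Ioc (0:ℝ) 1).indicator g with hGdef
  have hG : Integrable G := hgL1.integrable_indicator measurableSet_Ioc
  have hPcont : Continuous fun s : ℝ => ∫ t in (1:ℝ)..s, G t :=
    intervalIntegral.continuous_primitive (fun a b => hG.intervalIntegrable) 1
  set L : ℂ := ψ 1 + ∫ t in (1:ℝ)..(0:ℝ), G t with hLdef
  have hψL : Tendsto ψ (nhdsWithin 0 (Ioc 0 1)) (nhds L) := by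
    have h1 : Tendsto (fun s : ℝ => ψ 1 + ∫ t in (1:ℝ)..s, G t)
        (nhdsWithin 0 (Ioc 0 1)) (nhds L) :=
      (tendsto_const_nhds.add (hPcont.tendsto 0)).mono_left nhdsWithin_le_nhds
    refine h1.congr' ?_
    filter_upwards [self_mem_nhdsWithin] with s hs
    have h2 : ∫ t in s..(1:ℝ), G t = ∫ t in s..(1:ℝ), g t := by
      apply intervalIntegral.integral_congr
      intro t ht
      rw [uIcc_of_le hs.2] at ht
      exact Set.indicator_of_mem (show t ∈ Ioc (0:ℝ) 1 from ⟨lt_of_lt_of_le hs.1 ht.1, ht.2⟩) g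
    have h3 : ∫ t in s..(1:ℝ), g t = ψ 1 - ψ s := ftc_Ioc ψ g hdψ hcg hs.1 hs.2 le_rfl
    rw [intervalIntegral.integral_symm, h2, h3]
    ring
  -- L = 0
  have hL0 : L = 0 := by
    by_contra hL
    have hLpos : 0 < ‖L‖ := norm_pos_iff.2 hL
    have hev : ∀ᶠ (t : ℝ) in nhdsWithin 0 (Ioc (0:ℝ) 1), ‖(t:ℂ)^3 * φ₁ t - L‖ ≤ ‖L‖/2 := by
      filter_upwards [Metric.tendsto_nhds.1 hψL (‖L‖/2) (by positivity)] with t ht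
      rw [dist_eq_norm] at ht
      exact ht.le
    obtain ⟨δ, hδ0, hδ1, hbnd⟩ := exists_delta hev
    set C : ℝ := ‖L‖ * (δ^2)⁻¹/4 + ‖φ δ‖ + 1 with hCdef
    have hC0 : 0 < C := by positivity
    -- lower bound on ‖φ a‖ for a ∈ Ioc 0 δ
    have hlow : ∀ a ∈ Ioc (0:ℝ) δ, ‖L‖ * (a^2)⁻¹/4 - C ≤ ‖φ a‖ := by
      intro a ha
      have hest := estimate φ φ₁ hdφ hcφ₁ L (‖L‖/2) (by positivity) ha.1 ha.2 hδ1 hbnd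
      set r : ℝ := ((a^2)⁻¹ - (δ^2)⁻¹)/2 with hrdef
      have hr0 : 0 ≤ r := by
        have : (δ^2)⁻¹ ≤ (a^2)⁻¹ :=
          inv_anti₀ (pow_pos ha.1 2) (pow_le_pow_left₀ ha.1.le ha.2 2)
        rw [hrdef]; linarith
      have h1 := norm_sub_norm_le (((r:ℝ):ℂ) * L) (φ δ - φ a)
      rw [norm_sub_rev (((r:ℝ):ℂ) * L) (φ δ - φ a)] at h1
      have h2 : ‖φ δ - φ a‖ ≤ ‖φ δ‖ + ‖φ a‖ := norm_sub_le _ _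
      have h3 : ‖((r:ℝ):ℂ) * L‖ = r * ‖L‖ := by
        rw [norm_mul, Complex.norm_real, Real.norm_eq_abs, abs_of_nonneg hr0]
      have h4 : ‖L‖ * (a^2)⁻¹/4 - C ≤ r * ‖L‖ / 2 - ‖φ δ‖ := by
        rw [hrdef, hCdef]
        have : 0 ≤ ‖L‖ := norm_nonneg L
        nlinarith
      have h5 : r * ‖L‖ / 2 ≤ r * ‖L‖ - (‖L‖/2) * r := by nlinarith
      nlinarith [hest, h1, h2, h3]
    -- choose a₀ and derive non-integrability contradiction
    set a₀ : ℝ := min δ (Real.sqrt (‖L‖/(8*C))) with ha₀def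
    have ha₀0 : 0 < a₀ := lt_min hδ0 (Real.sqrt_pos.2 (by positivity))
    have hsubδ : Ioo (0:ℝ) a₀ ⊆ Ioc 0 δ := fun x hx =>
      ⟨hx.1, le_trans hx.2.le (min_le_left _ _)⟩
    have hlow2 : ∀ a ∈ Ioo (0:ℝ) a₀, ‖L‖^2/64 * a⁻¹ ≤ a^3 * ‖φ a‖^2 := by
      intro a ha
      have ha0 : 0 < a := ha.1
      have haδ : a ∈ Ioc (0:ℝ) δ := hsubδ ha
      have ha2 : (0:ℝ) < a^2 := pow_pos ha0 2
      have hsq : a^2 ≤ ‖L‖/(8*C) := by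
        have h1 : a ≤ Real.sqrt (‖L‖/(8*C)) := le_trans ha.2.le (min_le_right _ _)
        calc a^2 ≤ Real.sqrt (‖L‖/(8*C))^2 := pow_le_pow_left₀ ha0.le h1 2
          _ = ‖L‖/(8*C) := Real.sq_sqrt (by positivity)
      have h8 : a^2 * (8*C) ≤ ‖L‖ := (le_div_iff₀ (by positivity)).1 hsq
      have hinv : a^2 * (a^2)⁻¹ = 1 := mul_inv_cancel₀ ha2.ne'
      have hC8 : C ≤ ‖L‖ * (a^2)⁻¹/8 := by
        have hmul := mul_le_mul_of_nonneg_left h8 (inv_nonneg.2 ha2.le)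
        have h9 : 8*C ≤ (a^2)⁻¹ * ‖L‖ := by
          calc 8*C = (a^2)⁻¹ * (a^2 * (8*C)) := by
                rw [← mul_assoc, mul_comm ((a^2)⁻¹) (a^2), hinv, one_mul]
            _ ≤ (a^2)⁻¹ * ‖L‖ := hmul
        have hcm : (a^2)⁻¹ * ‖L‖ = ‖L‖ * (a^2)⁻¹ := mul_comm _ _
        linarith
      have hφa : ‖L‖ * (a^2)⁻¹/8 ≤ ‖φ a‖ := by
        have := hlow a haδ
        linarith
      have hsq2 : (‖L‖ * (a^2)⁻¹/8)^2 ≤ ‖φ a‖^2 := pow_le_pow_left₀ (by positivity) hφa 2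
      have hid : a^3 * (‖L‖ * (a^2)⁻¹/8)^2 = ‖L‖^2/64 * a⁻¹ := by
        field_simp
        ring
      calc ‖L‖^2/64 * a⁻¹ = a^3 * (‖L‖ * (a^2)⁻¹/8)^2 := hid.symm
        _ ≤ a^3 * ‖φ a‖^2 := mul_le_mul_of_nonneg_left hsq2 (by positivity)
    have hIφ : IntegrableOn (fun a => a^3 * ‖φ a‖^2) (Ioo 0 a₀) :=
      hint1.mono_set (subset_trans Ioo_subset_Ioc_self
        (Ioc_subset_Ioc_right (le_trans (min_le_left _ _) hδ1)))
    have hmeas : AEStronglyMeasurable (fun a : ℝ => ‖L‖^2/64 * a⁻¹)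
        (volume.restrict (Ioo 0 a₀)) :=
      ((measurable_id.inv.const_mul (‖L‖^2/64)).aestronglyMeasurable)
    have hI : IntegrableOn (fun a : ℝ => ‖L‖^2/64 * a⁻¹) (Ioo 0 a₀) := by
      refine Integrable.mono' hIφ hmeas ?_
      rw [ae_restrict_iff' measurableSet_Ioo]
      refine Eventually.of_forall fun a ha => ?_
      rw [Real.norm_eq_abs, abs_of_nonneg (mul_nonneg (by positivity) (inv_nonneg.2 ha.1.le))]
      exact hlow2 a ha
    have hc : (‖L‖^2/64 : ℝ) ≠ 0 := by positivity
    have hIinv : IntegrableOn (fun a : ℝ => a⁻¹) (Ioo 0 a₀) := by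
      have h1 := hI.const_mul ((‖L‖^2/64 : ℝ)⁻¹)
      have heq : (fun a : ℝ => (‖L‖^2/64 : ℝ)⁻¹ * (‖L‖^2/64 * a⁻¹)) = fun a : ℝ => a⁻¹ := by
        funext a
        rw [← mul_assoc, inv_mul_cancel₀ hc, one_mul]
      rwa [heq] at h1
    have hrpow : IntegrableOn (fun a : ℝ => a ^ (-1:ℝ)) (Ioo 0 a₀) := by
      refine hIinv.congr_fun (fun a ha => ?_) measurableSet_Ioo
      rw [Real.rpow_neg_one]
    rw [intervalIntegral.integrableOn_Ioo_rpow_iff ha₀0] at hrpow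
    linarith
  -- Part 2
  rw [hL0] at hψL
  refine ⟨hψL, ?_⟩
  rw [NormedAddCommGroup.tendsto_nhds_zero]
  intro ε hε
  have hev : ∀ᶠ (t : ℝ) in nhdsWithin 0 (Ioc (0:ℝ) 1), ‖(t:ℂ)^3 * φ₁ t - 0‖ ≤ ε/4 := by
    filter_upwards [Metric.tendsto_nhds.1 hψL (ε/4) (by positivity)] with t ht
    rw [dist_eq_norm] at ht
    exact ht.le
  obtain ⟨δ, hδ0, hδ1, hbnd⟩ := exists_delta hev
  set θ : ℝ := min δ (ε/(4*(‖φ δ‖+1))) with hθdef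
  have hθ0 : 0 < θ := lt_min hδ0 (by positivity)
  filter_upwards [self_mem_nhdsWithin,
    mem_nhdsWithin_of_mem_nhds (Ioo_mem_nhds (by linarith : -θ < 0) hθ0)] with a ha1 ha2
  have ha0 : 0 < a := ha1.1
  have haθ : a < θ := ha2.2
  have ha2' : (0:ℝ) < a^2 := pow_pos ha0 2
  have haδ : a ∈ Ioc (0:ℝ) δ := ⟨ha0, le_of_lt (lt_of_lt_of_le haθ (min_le_left _ _))⟩
  have hest := estimate φ φ₁ hdφ hcφ₁ 0 (ε/4) (by positivity) ha0 haδ.2 hδ1 hbnd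
  rw [mul_zero, sub_zero] at hest
  have hrle : ((a^2)⁻¹ - (δ^2)⁻¹)/2 ≤ (a^2)⁻¹ := by
    have h1 : (0:ℝ) ≤ (δ^2)⁻¹ := by positivity
    have h2 : (0:ℝ) ≤ (a^2)⁻¹ := by positivity
    linarith
  have hφa : ‖φ a‖ ≤ ‖φ δ‖ + ε/4 * (a^2)⁻¹ := by
    have h1 := norm_sub_norm_le (φ a) (φ δ)
    rw [norm_sub_rev (φ a) (φ δ)] at h1
    have h2 : ε/4 * (((a^2)⁻¹ - (δ^2)⁻¹)/2) ≤ ε/4 * (a^2)⁻¹ :=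
      mul_le_mul_of_nonneg_left hrle (by positivity)
    linarith
  have hnorm : ‖(a:ℂ)^3 * φ a‖ = a^3 * ‖φ a‖ := by
    rw [norm_mul, norm_pow, Complex.norm_real, Real.norm_eq_abs, abs_of_pos ha0]
  rw [hnorm]
  have ha1' : a ≤ 1 := ha1.2
  have hcube : a^3 ≤ a := by nlinarith
  have haε : a < ε/(4*(‖φ δ‖+1)) := lt_of_lt_of_le haθ (min_le_right _ _)
  have hb1 : a * (‖φ δ‖+1) < ε/4 := by
    rw [lt_div_iff₀ (by positivity : (0:ℝ) < 4*(‖φ δ‖+1))] at haε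
    nlinarith
  have h3 : a^3 * (a^2)⁻¹ = a := by
    field_simp
  have hφδ0 : (0:ℝ) ≤ ‖φ δ‖ := norm_nonneg _
  calc a^3 * ‖φ a‖ ≤ a^3 * (‖φ δ‖ + ε/4 * (a^2)⁻¹) :=
        mul_le_mul_of_nonneg_left hφa (by positivity)
    _ = a^3 * ‖φ δ‖ + ε/4 * (a^3 * (a^2)⁻¹) := by ring
    _ = a^3 * ‖φ δ‖ + ε/4 * a := by rw [h3]
    _ < ε := by nlinarith
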